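/- (Burnside) If a subgroup G of GL(n,K), K an algebraically closed field, acts irreducibly on K^n, then the K-linear span of G is all of M_n(K); equivalently, G contains n² elements forming a linear basis of M_n(K). -/

import Mathlib

set_option synthInstance.maxHeartbeats 1000000
set_option maxHeartbeats 2000000

/-- The representation of a matrix subalgebra on `Kⁿ`, as a ring hom to endomorphisms. -/
noncomputable def burnsideRep {K : Type*} [Field K] (n : ℕ)
    (A : Subalgebra K (Matrix (Fin n) (Fin n) K)) :
    A →+* Module.End K (Fin n → K) where
  toFun a := (a : Matrix (Fin n) (Fin n) K).mulVecLin
  map_one' := by simp [Module.End.one_eq_id]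
  map_mul' a b := by simp [Matrix.mulVecLin_mul, Module.End.mul_eq_comp]
  map_zero' := by simp
  map_add' a b := by simp [Matrix.mulVecLin_add]

/-- (Burnside) If a subgroup `G` of `GL(n,K)`, `K` algebraically closed, acts
irreducibly on `Kⁿ`, then the `K`-linear span of (the matrices of) `G` is all of
`M_n(K)`. -/
theorem burnside_span_of_irreducible
    {K : Type*} [Field K] [IsAlgClosed K] (n : ℕ)
    (G : Subgroup (GL (Fin n) K))
    (hirr : ∀ W : Submodule K (Fin n → K),
      (∀ g ∈ G, ∀ w ∈ W, ((g : GL (Fin n) K) : Matrix (Fin n) (Fin n) K).mulVec w ∈ W) →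
      W = ⊥ ∨ W = ⊤) :
    Submodule.span K
        ((fun g : GL (Fin n) K => ((g : GL (Fin n) K) : Matrix (Fin n) (Fin n) K)) '' G)
      = ⊤ := by
  classical
  rcases Nat.eq_zero_or_pos n with hn | hn
  · subst hn; exact Subsingleton.elim _ _
  haveI : NeZero n := ⟨hn.ne'⟩
  set s : Set (Matrix (Fin n) (Fin n) K) :=
    (fun g : GL (Fin n) K => ((g : GL (Fin n) K) : Matrix (Fin n) (Fin n) K)) '' G with hs
  -- the image of `G` is a submonoid
  have hsub : s = ↑(Submonoid.map (Units.coeHom (Matrix (Fin n) (Fin n) K)) G.toSubmonoid) := by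
    ext x
    simp only [hs, Set.mem_image, SetLike.mem_coe, Submonoid.mem_map, Subgroup.mem_toSubmonoid]
    rfl
  have hspan : Submodule.span K s = Subalgebra.toSubmodule (Algebra.adjoin K s) := by
    rw [Algebra.adjoin_eq_span, hsub, Submonoid.closure_eq]
  suffices h : Algebra.adjoin K s = ⊤ by
    rw [hspan, h, Algebra.top_toSubmodule]
  set A : Subalgebra K (Matrix (Fin n) (Fin n) K) := Algebra.adjoin K s with hA
  letI : Module A (Fin n → K) := Module.compHom _ (burnsideRep n A)
  have hsmul : ∀ (a : A) (v : Fin n → K), a • v = (a : Matrix (Fin n) (Fin n) K).mulVec v :=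
    fun a v => rfl
  have halg : ∀ (c : K) (v : Fin n → K), (algebraMap K A c) • v = c • v := by
    intro c v
    rw [hsmul]
    show (algebraMap K (Matrix (Fin n) (Fin n) K) c).mulVec v = c • v
    simp [Algebra.algebraMap_eq_smul_one, Matrix.smul_mulVec]
  have hGA : ∀ g : GL (Fin n) K, g ∈ G →
      ((g : GL (Fin n) K) : Matrix (Fin n) (Fin n) K) ∈ A :=
    fun g hg => Algebra.subset_adjoin ⟨g, hg, rfl⟩
  -- Kⁿ is a simple A-module
  haveI : Nontrivial (Submodule A (Fin n → K)) :=
    ⟨⊥, ⊤, fun h => by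
      obtain ⟨v, hv⟩ := exists_ne (0 : Fin n → K)
      exact hv ((Submodule.mem_bot A).1 (h ▸ Submodule.mem_top))⟩
  haveI hVsimple : IsSimpleModule A (Fin n → K) := by
    refine { eq_bot_or_eq_top := ?_ }
    intro W
    let WK : Submodule K (Fin n → K) :=
      { carrier := W
        add_mem' := fun hx hy => W.add_mem hx hy
        zero_mem' := W.zero_mem
        smul_mem' := fun c v hv => by
          show (c • v) ∈ W
          rw [← halg]; exact W.smul_mem _ hv }
    have hstab : ∀ g ∈ G, ∀ w ∈ WK,
        ((g : GL (Fin n) K) : Matrix (Fin n) (Fin n) K).mulVec w ∈ WK := by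
      intro g hg w hw
      have := W.smul_mem ⟨_, hGA g hg⟩ hw
      exact this
    rcases hirr WK hstab with h | h
    · exact Or.inl ((Submodule.eq_bot_iff W).2 fun x hx => (Submodule.eq_bot_iff WK).1 h x hx)
    · exact Or.inr (Submodule.eq_top_iff'.2 fun x =>
        (Submodule.eq_top_iff'.1 h x : x ∈ WK))
  -- Schur: A-linear endomorphisms of Kⁿ are scalar
  have schur : ∀ f : (Fin n → K) →ₗ[A] (Fin n → K), ∃ c : K, ∀ v, f v = c • v := by
    intro f
    let fK : (Fin n → K) →ₗ[K] (Fin n → K) :=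
      { toFun := f
        map_add' := f.map_add
        map_smul' := fun c v => by
          simp only [RingHom.id_apply]
          rw [← halg, ← halg]; exact f.map_smul _ _ }
    obtain ⟨μ, hμ⟩ := Module.End.exists_eigenvalue fK
    obtain ⟨v₀, hv₀⟩ := hμ.exists_hasEigenvector
    let W : Submodule A (Fin n → K) :=
      { carrier := {v | f v = μ • v}
        zero_mem' := by simp
        add_mem' := fun {x y} hx hy => by
          show f (x + y) = μ • (x + y)
          rw [f.map_add, hx, hy, smul_add]
        smul_mem' := fun a v hv => by
          show f (a • v) = μ • (a • v)
          rw [show f (a • v) = a • f v from f.map_smul a v, show f v = μ • v from hv, hsmul, hsmul, Matrix.mulVec_smul] }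
    have hWtop : W = ⊤ := by
      rcases hVsimple.eq_bot_or_eq_top W with h | h
      · exfalso
        have hv₀W : v₀ ∈ W := hv₀.apply_eq_smul
        rw [h] at hv₀W
        exact hv₀.right ((Submodule.mem_bot A).1 hv₀W)
      · exact h
    exact ⟨μ, fun v => (Submodule.eq_top_iff'.1 hWtop v : f v = μ • v)⟩
  -- matrices as an A-module (left multiplication); the standard instance works:
  have hMsmul : ∀ (a : A) (m : Matrix (Fin n) (Fin n) K),
      a • m = (a : Matrix (Fin n) (Fin n) K) * m := fun _ _ => rfl
  -- column injections and projections
  let ι : Fin n → (Fin n → K) →ₗ[A] Matrix (Fin n) (Fin n) K := fun j =>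
    { toFun := fun v => Matrix.of fun i k => if k = j then v i else 0
      map_add' := fun x y => by
        ext i k
        by_cases h : k = j <;> simp [h]
      map_smul' := fun a v => by
        ext i k
        rw [RingHom.id_apply, hMsmul]
        by_cases h : k = j <;>
          simp [hsmul, Matrix.mul_apply, Matrix.mulVec, dotProduct, h, mul_ite] <;>
          exact congrFun (hsmul a v) i }
  let col : Fin n → Matrix (Fin n) (Fin n) K →ₗ[A] (Fin n → K) := fun i =>
    { toFun := fun m k => m k i
      map_add' := fun x y => rfl
      map_smul' := fun a m => rfl }
  have hdecomp : ∀ m : Matrix (Fin n) (Fin n) K, m = ∑ j, ι j (col j m) := by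
    intro m
    ext i k
    simp [ι, col, Finset.sum_ite_eq', Matrix.sum_apply]
    rfl
  have hsup : ⨆ j, LinearMap.range (ι j) = ⊤ := by
    rw [eq_top_iff]
    intro m _
    rw [hdecomp m]
    exact Submodule.sum_mem _ fun j _ =>
      Submodule.mem_iSup_of_mem j ⟨col j m, rfl⟩
  haveI : IsSemisimpleModule A (Matrix (Fin n) (Fin n) K) := by
    refine isSemisimpleModule_of_isSemisimpleModule_submodule'
      (p := fun j => LinearMap.range (ι j)) (fun j => ?_) hsup
    have hinj : Function.Injective (ι j) := by
      intro v w h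
      funext i
      have := congrFun (congrFun (congrArg (Matrix.of).symm h) i) j
      simpa [ι] using this
    exact IsSemisimpleModule.congr (LinearEquiv.ofInjective (ι j) hinj).symm
  -- A as an A-submodule of matrices, and a complementary projection
  let AM : Submodule A (Matrix (Fin n) (Fin n) K) :=
    { carrier := A
      add_mem' := fun ha hb => A.add_mem ha hb
      zero_mem' := A.zero_mem
      smul_mem' := fun a m hm => by rw [hMsmul]; exact A.mul_mem a.2 hm }
  obtain ⟨W, hW⟩ := exists_isCompl AM
  let π : Matrix (Fin n) (Fin n) K →ₗ[A] Matrix (Fin n) (Fin n) K :=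
    AM.subtype ∘ₗ AM.linearProjOfIsCompl W hW
  have hπmem : ∀ m, π m ∈ AM := fun m => (AM.linearProjOfIsCompl W hW m).2
  have hπ1 : π (1 : Matrix (Fin n) (Fin n) K) = 1 := by
    have h1 : (1 : Matrix (Fin n) (Fin n) K) ∈ AM := A.one_mem
    show (AM.linearProjOfIsCompl W hW 1 : Matrix (Fin n) (Fin n) K) = 1
    rw [show (1 : Matrix (Fin n) (Fin n) K) = ((⟨1, h1⟩ : AM) : Matrix (Fin n) (Fin n) K)
      from rfl]
    exact congrArg Subtype.val (Submodule.projectionOnto_apply_left hW _)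
  -- every A-endomorphism of matrices is right multiplication by a fixed matrix
  choose c hc using fun i j => schur ((col i) ∘ₗ π ∘ₗ (ι j))
  have hπm : ∀ m : Matrix (Fin n) (Fin n) K,
      π m = m * Matrix.of (fun j i => c i j) := by
    intro m
    have h1 : π m = ∑ j, π (ι j (col j m)) := by
      conv_lhs => rw [hdecomp m]
      rw [map_sum]
    ext r i
    rw [h1]
    have h2 : ∀ j, (π (ι j (col j m))) r i = c i j * m r j := by
      intro j
      have := congrFun (hc i j (col j m)) r
      exact this
    simp only [Matrix.sum_apply, h2, Matrix.mul_apply, Matrix.of_apply]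
    exact Finset.sum_congr rfl fun j _ => mul_comm _ _
  have hC : Matrix.of (fun j i => c i j) = (1 : Matrix (Fin n) (Fin n) K) := by
    have := hπm 1
    rw [hπ1, one_mul] at this
    exact this.symm
  have hπid : ∀ m : Matrix (Fin n) (Fin n) K, π m = m := by
    intro m; rw [hπm, hC, mul_one]
  rw [eq_top_iff]
  intro m _
  rw [← hπid m]
  exact hπmem m
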